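/- Let F be a free group and let a, b ∈ F with ab ≠ ba. Then the subgroup generated by a and b is a free group of rank 2. -/

import Mathlib

private lemma freeGroup_commute_of_subsingleton {ι : Type*} [Subsingleton ι]
    (x y : FreeGroup ι) : Commute x y := by
  induction x with
  | C1 => exact Commute.one_left y
  | of i =>
    induction y with
    | C1 => exact Commute.one_right _
    | of j => rw [Subsingleton.elim i j]
    | inv_of j h => exact h.inv_right
    | mul u v hu hv => exact hu.mul_right hv
  | inv_of i h => exact h.inv_left
  | mul u v hu hv => exact hu.mul_left hv

/-- Two non-commuting elements of a free group generate a free group of rank 2. -/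
theorem noncommuting_generate_free_rank_two {α : Type*} (a b : FreeGroup α)
    (hab : a * b ≠ b * a) :
    Nonempty (FreeGroupBasis (Fin 2) (Subgroup.closure {a, b} : Subgroup (FreeGroup α))) := by
  classical
  have ha : a ∈ Subgroup.closure ({a, b} : Set (FreeGroup α)) :=
    Subgroup.subset_closure (by simp)
  have hb : b ∈ Subgroup.closure ({a, b} : Set (FreeGroup α)) :=
    Subgroup.subset_closure (by simp)
  set H := (Subgroup.closure {a, b} : Subgroup (FreeGroup α)) with hHdef
  let ι := IsFreeGroup.Generators H
  let e : H ≃* FreeGroup ι := IsFreeGroup.toFreeGroup H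
  -- the two generators of H, which do not commute
  let A : H := ⟨a, ha⟩
  let B : H := ⟨b, hb⟩
  have hAB : A * B ≠ B * A := fun h => hab (congrArg Subtype.val h)
  -- surjection from the free group on two generators onto H
  let g : Fin 2 → H := ![A, B]
  let f : FreeGroup (Fin 2) →* H := FreeGroup.lift g
  have hfrange : f.range = ⊤ := by
    rw [FreeGroup.range_lift_eq_closure, eq_top_iff,
      ← Subgroup.closure_closure_coe_preimage (k := ({a, b} : Set (FreeGroup α)))]
    apply Subgroup.closure_mono
    rintro ⟨x, hx⟩ hx2
    simp only [Set.mem_preimage, Set.mem_insert_iff, Set.mem_singleton_iff] at hx2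
    rcases hx2 with h | h
    · exact ⟨0, Subtype.ext (by simp [g, A, h])⟩
    · exact ⟨1, Subtype.ext (by simp [g, B, h])⟩
  have hf : Function.Surjective f := by
    rw [← MonoidHom.range_eq_top]; exact hfrange
  let φ : FreeGroup (Fin 2) →* FreeGroup ι := e.toMonoidHom.comp f
  have hφ : Function.Surjective φ := e.surjective.comp hf
  -- abelianize
  let ψ : Abelianization (FreeGroup (Fin 2)) →* Abelianization (FreeGroup ι) :=
    Abelianization.map φ
  have hψ : Function.Surjective ψ := by
    intro y
    induction y using QuotientGroup.induction_on with | _ z => ?_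
    obtain ⟨w, rfl⟩ := hφ z
    exact ⟨Abelianization.of w, rfl⟩
  let ψ' : FreeAbelianGroup (Fin 2) →+ FreeAbelianGroup ι := MonoidHom.toAdditive ψ
  have hψ' : Function.Surjective ψ' := hψ
  let L : (Fin 2 →₀ ℤ) →ₗ[ℤ] (ι →₀ ℤ) :=
    (((FreeAbelianGroup.equivFinsupp ι).toAddMonoidHom.comp ψ').comp
      (FreeAbelianGroup.equivFinsupp (Fin 2)).symm.toAddMonoidHom).toIntLinearMap
  have hL : Function.Surjective L :=
    (FreeAbelianGroup.equivFinsupp ι).surjective.comp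
      (hψ'.comp (FreeAbelianGroup.equivFinsupp (Fin 2)).symm.surjective)
  have hrank := LinearMap.lift_rank_le_of_surjective L hL
  rw [rank_finsupp_self, rank_finsupp_self] at hrank
  simp only [Cardinal.lift_lift, Cardinal.mk_fintype, Fintype.card_fin,
    Nat.cast_ofNat, Cardinal.lift_ofNat, Cardinal.lift_uzero] at hrank
  -- hrank : #ι ≤ 2
  have hlow : (2 : Cardinal) ≤ Cardinal.mk ι := by
    rcases subsingleton_or_nontrivial ι with hsub | hn
    · exfalso
      have := freeGroup_commute_of_subsingleton (e A) (e B)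
      apply hAB
      apply e.injective
      rw [map_mul, map_mul, this]
    · obtain ⟨x, y, hxy⟩ := hn
      exact Cardinal.two_le_iff.mpr ⟨x, y, hxy⟩
  have hcard : Cardinal.mk ι = 2 := le_antisymm hrank hlow
  have : Nonempty (ι ≃ Fin 2) := by
    rw [← Cardinal.lift_mk_eq']
    simp [hcard]
  obtain ⟨eq⟩ := this
  exact ⟨(IsFreeGroup.basis H).reindex eq⟩
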